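/- arXiv:1212.1518 — 2 statements merged into one kernel-verified Lean document; each statement's English description precedes it below -/
import Mathlib

section
/- Let b ∈ ℚ with b ≠ 0, and let φ_b(z) = z/2 + b/z, extended to ℙ¹(ℚ) = ℚ ∪ {∞} by φ_b(0) = ∞ and φ_b(∞) = ∞. If α ∈ ℙ¹(ℚ) is a periodic point of φ_b of least period n (i.e., φ_b^n(α) = α and φ_b^k(α) ≠ α for all 0 < k < n), then n ≤ 2. -/
/-!
The twists `φ_b(z) = z/2 + b/z` of `z²` have no rational points of least
period greater than 2.

We model ℙ¹(ℚ) as `Option ℚ`, with `none` playing the role of ∞;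
`φ_b(0) = ∞` and `φ_b(∞) = ∞`.
-/

/-- The map `φ_b(z) = z/2 + b/z` on `ℙ¹(ℚ)`, with `φ_b(0) = ∞` and
`φ_b(∞) = ∞`. -/
def phib (b : ℚ) : Option ℚ → Option ℚ
  | none => none
  | some x => if x = 0 then none else some (x / 2 + b / x)

/-- Auxiliary: the map `x ↦ x² - 2`, to which `φ_b` is semiconjugate via the
trace coordinate `T(x) = 2(x²+2b)/(x²-2b)`. -/
def gmap : ℚ → ℚ := fun x => x * x - 2

lemma gmap_den (t : ℚ) : (gmap t).den = t.den * t.den := by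
  have hd0 : (0:ℤ) < (t.den : ℤ) * t.den := by positivity
  have hcop : IsCoprime (t.num) (t.den : ℤ) := by
    rw [Int.isCoprime_iff_gcd_eq_one]
    exact t.reduced
  have hcop2 : IsCoprime (t.num * t.num - 2 * ((t.den:ℤ) * t.den)) ((t.den:ℤ) * t.den) := by
    have h := (hcop.mul_left hcop).mul_right (hcop.mul_left hcop)
    have h2 := h.add_mul_right_left (-2)
    convert h2 using 1 <;> [rfl; ring_nf]
  have hcopn : Nat.Coprime (t.num * t.num - 2 * ((t.den:ℤ) * t.den)).natAbs
      ((t.den:ℤ) * t.den).natAbs := by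
    exact Int.isCoprime_iff_gcd_eq_one.mp hcop2
  have hden : ((t.den : ℚ)) ≠ 0 := by
    exact_mod_cast t.den_ne_zero
  have hn : (t.num : ℚ) = t * t.den := by
    have h := Rat.num_div_den t
    rw [div_eq_iff hden] at h
    exact h
  have heq : gmap t = ((t.num * t.num - 2 * ((t.den:ℤ) * t.den) : ℤ) : ℚ) /
      (((t.den:ℤ) * t.den : ℤ) : ℚ) := by
    show t * t - 2 = _
    push_cast
    rw [eq_div_iff (by positivity), hn]
    ring
  have hfin := Rat.den_div_eq_of_coprime hd0 hcopn
  rw [← heq] at hfin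
  exact_mod_cast hfin

lemma gmap_iter_den (t : ℚ) (k : ℕ) : (gmap^[k] t).den = t.den ^ (2^k) := by
  induction k with
  | zero => simp
  | succ k ih =>
      rw [Function.iterate_succ_apply', gmap_den, ih, ← pow_add]
      congr 1
      rw [pow_succ]
      ring

lemma gmap_growth {x : ℚ} (hx : 2 < |x|) : |x| < |gmap x| := by
  have h1 : |x * x| - |(2:ℚ)| ≤ |x * x - 2| := abs_sub_abs_le_abs_sub _ _
  have h2 : |x * x| = |x| * |x| := abs_mul x x
  have h3 : |(2:ℚ)| = 2 := by norm_num
  show |x| < |x * x - 2|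
  nlinarith [abs_nonneg x]

lemma gmap_escape {t : ℚ} (ht : 2 < |t|) : ∀ k : ℕ,
    2 < |gmap^[k] t| ∧ (1 ≤ k → |t| < |gmap^[k] t|) := by
  intro k
  induction k with
  | zero => simpa using ht
  | succ k ih =>
      obtain ⟨ih1, ih2⟩ := ih
      have hgr := gmap_growth ih1
      rw [← Function.iterate_succ_apply' gmap k t] at hgr
      constructor
      · linarith
      · intro _
        rcases Nat.eq_zero_or_pos k with hk | hk
        · subst hk; simpa using hgr
        · have := ih2 hk; linarith

lemma gmap_periodic {t : ℚ} {n : ℕ} (hn : 2 ≤ n) (h : gmap^[n] t = t) :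
    t = 2 ∨ t = -1 := by
  have habs : |t| ≤ 2 := by
    by_contra h2
    push_neg at h2
    have := (gmap_escape h2 n).2 (by omega)
    rw [h] at this
    exact lt_irrefl _ this
  have hden : t.den = 1 := by
    have hd := gmap_iter_den t n
    rw [h] at hd
    by_contra hne
    have h2 : 2 ≤ t.den := by
      have := t.pos
      omega
    have h4 : 2 ≤ 2^n := by
      calc 2 ≤ 2^1 := by norm_num
      _ ≤ 2^n := Nat.pow_le_pow_right (by norm_num) (by omega)
    have : t.den < t.den ^ (2^n) := by
      calc t.den < t.den ^ 2 := by nlinarith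
      _ ≤ t.den ^ (2^n) := Nat.pow_le_pow_right (by omega) h4
    omega
  have hint : (t.num : ℚ) = t := (Rat.den_eq_one_iff t).mp hden
  have hnum : |t.num| ≤ 2 := by
    rw [← hint] at habs
    exact_mod_cast habs
  have hcases : t = -2 ∨ t = -1 ∨ t = 0 ∨ t = 1 ∨ t = 2 := by
    have h1 := abs_le.mp hnum
    have h5 : t.num = -2 ∨ t.num = -1 ∨ t.num = 0 ∨ t.num = 1 ∨ t.num = 2 := by omega
    rcases h5 with h5|h5|h5|h5|h5 <;> rw [← hint, h5] <;> norm_num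
  have key : ∀ v : ℚ, gmap^[2] t = v → gmap v = v → t = v := by
    intro v e2 efix
    rw [← h, show n = (n-2)+2 by omega, Function.iterate_add_apply, e2,
      Function.iterate_fixed efix]
  rcases hcases with hc|hc|hc|hc|hc
  · exfalso
    have : t = (2:ℚ) := key 2 (by rw [hc]; norm_num [gmap, Function.iterate_succ_apply'])
      (by norm_num [gmap])
    rw [hc] at this; norm_num at this
  · exact Or.inr hc
  · exfalso
    have : t = (2:ℚ) := key 2 (by rw [hc]; norm_num [gmap, Function.iterate_succ_apply'])
      (by norm_num [gmap])
    rw [hc] at this; norm_num at this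
  · exfalso
    have : t = (-1:ℚ) := key (-1) (by rw [hc]; norm_num [gmap, Function.iterate_succ_apply'])
      (by norm_num [gmap])
    rw [hc] at this; norm_num at this
  · exact Or.inl hc

lemma Tstep (b x : ℚ) (hx : x ≠ 0) (hx2 : x * x - 2 * b ≠ 0) :
    gmap (2 * (x * x + 2 * b) / (x * x - 2 * b)) =
      2 * ((x / 2 + b / x) * (x / 2 + b / x) + 2 * b) /
        ((x / 2 + b / x) * (x / 2 + b / x) - 2 * b) := by
  have h4x : (4 : ℚ) * (x * x) ≠ 0 := by positivity
  have hy : (x / 2 + b / x) * (x / 2 + b / x) - 2 * b = (x * x - 2 * b)^2 / (4 * (x * x)) := by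
    field_simp
    ring
  have hyne : (x / 2 + b / x) * (x / 2 + b / x) - 2 * b ≠ 0 := by
    rw [hy]
    exact div_ne_zero (pow_ne_zero 2 hx2) h4x
  show 2 * (x * x + 2 * b) / (x * x - 2 * b) * (2 * (x * x + 2 * b) / (x * x - 2 * b)) - 2 = _
  rw [eq_div_iff hyne]
  have hx2' : x ^ 2 - 2 * b ≠ 0 := by rwa [sq]
  field_simp
  ring


/-- If `α ∈ ℙ¹(ℚ)` is a periodic point of `φ_b` (with `b ≠ 0`) of least
period `n`, then `n ≤ 2`. -/
theorem phib_least_period_le_two (b : ℚ) (hb : b ≠ 0) (α : Option ℚ) (n : ℕ)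
    (hn : 0 < n) (hper : (phib b)^[n] α = α)
    (hleast : ∀ k : ℕ, 0 < k → k < n → (phib b)^[k] α ≠ α) :
    n ≤ 2 := by
  by_contra hn3
  push_neg at hn3
  have hinf : ∀ m : ℕ, (phib b)^[m] (none : Option ℚ) = none := fun m =>
    Function.iterate_fixed rfl m
  obtain ⟨a, rfl⟩ : ∃ a : ℚ, α = some a := by
    cases α with
    | none => exact absurd (hinf 1) (hleast 1 one_pos (by omega))
    | some a => exact ⟨a, rfl⟩
  have hB : ∀ k : ℕ, (phib b)^[k] (some a) ≠ none := by
    intro k hk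
    have hkle : k ≤ n * k := Nat.le_mul_of_pos_left k hn
    have h1 : (phib b)^[n * k + n] (some a) = some a := by
      rw [show n * k + n = n * (k + 1) by ring, Function.iterate_mul]
      exact Function.iterate_fixed hper (k + 1)
    have h2 : (phib b)^[n * k + n] (some a) = none := by
      rw [show n * k + n = (n * k + n - k) + k by omega, Function.iterate_add_apply, hk, hinf]
    rw [h1] at h2
    exact Option.some_ne_none a h2
  set c : ℕ → ℚ := fun k => ((phib b)^[k] (some a)).getD 0 with hc
  have hsome : ∀ k : ℕ, (phib b)^[k] (some a) = some (c k) := by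
    intro k
    rw [hc]
    cases hx : (phib b)^[k] (some a) with
    | none => exact absurd hx (hB k)
    | some x => simp [hx]
  have hc0 : c 0 = a := rfl
  have hC : ∀ k : ℕ, c k ≠ 0 := by
    intro k hk
    apply hB (k + 1)
    rw [Function.iterate_succ_apply', hsome k, hk]
    simp [phib]
  have hrec : ∀ k : ℕ, c (k + 1) = c k / 2 + b / c k := by
    intro k
    have h1 : (phib b)^[k + 1] (some a) = some (c k / 2 + b / c k) := by
      rw [Function.iterate_succ_apply', hsome k]
      simp only [phib, if_neg (hC k)]
    have h2 := hsome (k + 1)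
    rw [h1] at h2
    exact (Option.some_inj.mp h2).symm
  have hcn : c n = a := by
    have h2 := hsome n
    rw [hper] at h2
    exact (Option.some_inj.mp h2).symm
  have hD : ∀ k : ℕ, c k * c k - 2 * b ≠ 0 := by
    intro k hk
    have hfix : phib b (some (c k)) = some (c k) := by
      simp only [phib, if_neg (hC k)]
      congr 1
      have hck := hC k
      field_simp
      nlinarith [hk]
    have hstay : ∀ i : ℕ, (phib b)^[i] (some (c k)) = some (c k) :=
      fun i => Function.iterate_fixed hfix i
    have hkle : k ≤ n * (k + 1) := by
      have h3 := Nat.le_mul_of_pos_left (k + 1) hn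
      omega
    have h1 : (phib b)^[n * (k + 1)] (some a) = some a := by
      rw [Function.iterate_mul]
      exact Function.iterate_fixed hper (k + 1)
    have h2 : (phib b)^[n * (k + 1)] (some a) = some (c k) := by
      rw [show n * (k + 1) = (n * (k + 1) - k) + k by omega, Function.iterate_add_apply,
        hsome k, hstay]
    rw [h1] at h2
    have ha : a = c k := Option.some_inj.mp h2
    apply hleast 1 one_pos (by omega)
    rw [Function.iterate_one, ha]
    exact hfix
  set T : ℚ → ℚ := fun x => 2 * (x * x + 2 * b) / (x * x - 2 * b) with hT
  have hiter : ∀ k : ℕ, gmap^[k] (T a) = T (c k) := by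
    intro k
    induction k with
    | zero => rw [Function.iterate_zero_apply, hc0]
    | succ k ih =>
        rw [Function.iterate_succ_apply', ih, hrec k, hT]
        exact Tstep b (c k) (hC k) (hD k)
  have hper' : gmap^[n] (T a) = T a := by rw [hiter n, hcn]
  have hd0 : a * a - 2 * b ≠ 0 := by
    have := hD 0
    rwa [hc0] at this
  have ha0 : a ≠ 0 := by
    have := hC 0
    rwa [hc0] at this
  rcases gmap_periodic (by omega) hper' with ht | ht
  · rw [hT] at ht
    simp only at ht
    rw [div_eq_iff hd0] at ht
    apply hb
    linarith
  · rw [hT] at ht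
    simp only at ht
    rw [div_eq_iff hd0] at ht
    have hab : 2 * b = -(3 * (a * a)) := by linarith
    have hstep1 : phib b (some a) = some (-a) := by
      simp only [phib, if_neg ha0]
      congr 1
      field_simp
      linarith
    have hstep2 : phib b (some (-a)) = some a := by
      have hna : (-a : ℚ) ≠ 0 := neg_ne_zero.mpr ha0
      simp only [phib, if_neg hna]
      congr 1
      field_simp
      linarith
    apply hleast 2 two_pos (by omega)
    rw [Function.iterate_succ_apply, Function.iterate_one, hstep1, hstep2]
end

section
/- Let α ∈ ℂ be algebraic over ℚ with [ℚ(α):ℚ] ≤ 2. If α^(2^n) = α for some integer n ≥ 1 (i.e., α is a periodic point of the map z ↦ z²), then α⁴ = α; that is, every periodic point of z ↦ z² lying in ℚ or a quadratic extension of ℚ has period 1 or 2. -/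
/-!
Every periodic point of `z ↦ z²` lying in ℚ or a quadratic extension of ℚ
has period 1 or 2: if `[ℚ(α):ℚ] ≤ 2` and `α^(2^n) = α` for some `n ≥ 1`,
then `α⁴ = α`.
-/

/-- An odd number with totient at most 2 divides 3. -/
lemma aux_odd_totient_le_two {m : ℕ} (hm : 0 < m) (hodd : Odd m)
    (ht : m.totient ≤ 2) : m ∣ 3 := by
  have hdiv : ∀ d : ℕ, d ∣ m → d.totient ≤ 2 := by
    intro d hd
    exact le_trans (Nat.le_of_dvd (Nat.totient_pos.mpr hm) (Nat.totient_dvd_of_dvd hd)) ht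
  have hp3 : ∀ {d : ℕ}, Nat.Prime d → d ∣ m → d = 3 := by
    intro p hp hpm
    have h2 : p ≠ 2 := by
      rintro rfl
      have h1 := Nat.even_iff.mp (even_iff_two_dvd.mpr hpm)
      have h2 := Nat.odd_iff.mp hodd
      omega
    have hle := hdiv p hpm
    rw [Nat.totient_prime hp] at hle
    have hlb := hp.two_le
    have hub : p ≤ 3 := by omega
    interval_cases p <;> simp_all
  have hm0 : m ≠ 0 := hm.ne'
  obtain ⟨k, hpow⟩ : ∃ k, m = 3 ^ k :=
    ⟨_, Nat.eq_prime_pow_of_unique_prime_dvd hm0 hp3⟩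
  match k, hpow with
  | 0, hpow => simp [hpow]
  | 1, hpow => simp [hpow]
  | (k + 2), hpow =>
    exfalso
    have h9 : (9 : ℕ) ∣ m := by
      rw [hpow]
      have h32 : (3:ℕ)^2 ∣ 3 ^ (k + 2) := pow_dvd_pow 3 (by omega)
      simpa using h32
    have h96 : Nat.totient 9 = 6 := by decide
    have := hdiv 9 h9
    omega

/-- If `α ∈ ℂ` is algebraic of degree at most 2 over ℚ (i.e. a root of a
nonzero rational polynomial of degree at most 2) and `α^(2^n) = α` for some
`n ≥ 1`, then `α⁴ = α`. -/
theorem quadratic_periodic_point_of_squaring (α : ℂ)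
    (halg : ∃ p : Polynomial ℚ, p ≠ 0 ∧ p.degree ≤ 2 ∧ Polynomial.aeval α p = 0)
    (n : ℕ) (hn : 1 ≤ n) (hper : α ^ 2 ^ n = α) :
    α ^ 4 = α := by
  rcases eq_or_ne α 0 with rfl | hα
  · simp
  have h2n : 2 ≤ 2 ^ n := by
    calc 2 = 2 ^ 1 := (pow_one 2).symm
      _ ≤ 2 ^ n := Nat.pow_le_pow_right (by norm_num) hn
  have hk1 : α ^ (2 ^ n - 1) = 1 := by
    have h : α ^ (2 ^ n - 1) * α = 1 * α := by
      rw [one_mul, ← pow_succ, Nat.sub_add_cancel (by omega)]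
      exact hper
    exact mul_right_cancel₀ hα h
  set m := orderOf α with hmdef
  have hm0 : 0 < m := by
    have h : IsOfFinOrder α := isOfFinOrder_iff_pow_eq_one.mpr ⟨2 ^ n - 1, by omega, hk1⟩
    exact h.orderOf_pos
  have hmdvd : m ∣ 2 ^ n - 1 := orderOf_dvd_of_pow_eq_one hk1
  have hmodd : Odd m := by
    have hodd : Odd (2 ^ n - 1) := by
      have hev : Even (2 ^ n) := by
        rcases Nat.exists_eq_add_of_le hn with ⟨c, rfl⟩
        exact Nat.even_pow.mpr ⟨even_two, by omega⟩
      rcases hev with ⟨r, hr⟩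
      exact ⟨r - 1, by omega⟩
    exact hodd.of_dvd_nat hmdvd
  have hprim : IsPrimitiveRoot α m := IsPrimitiveRoot.orderOf α
  obtain ⟨p, hp0, hpdeg, hpev⟩ := halg
  have halgint : IsAlgebraic ℚ α := ⟨p, hp0, hpev⟩
  have hminle : (minpoly ℚ α).degree ≤ 2 :=
    le_trans (minpoly.degree_le_of_ne_zero ℚ α hp0 hpev) hpdeg
  have hcyc : Polynomial.cyclotomic m ℚ = minpoly ℚ α :=
    Polynomial.cyclotomic_eq_minpoly_rat hprim hm0
  have htot : m.totient ≤ 2 := by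
    have hdeg : (Polynomial.cyclotomic m ℚ).natDegree = m.totient :=
      Polynomial.natDegree_cyclotomic m ℚ
    have hle : (minpoly ℚ α).natDegree ≤ 2 := by
      have := Polynomial.natDegree_le_iff_degree_le.mpr hminle
      simpa using this
    rw [← hdeg, hcyc]
    exact hle
  have hm3 : m ∣ 3 := aux_odd_totient_le_two hm0 hmodd htot
  have h3 : α ^ 3 = 1 := by
    rcases hm3 with ⟨c, hc⟩
    calc α ^ 3 = (α ^ m) ^ c := by rw [← pow_mul, ← hc]
      _ = 1 := by rw [pow_orderOf_eq_one α, one_pow]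
  calc α ^ 4 = α ^ 3 * α := by ring
    _ = α := by rw [h3, one_mul]
end
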